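/- Let f : ℝ → ℝ ∪ {±∞} be a Borel measurable function vanishing at infinity (every super-level set has finite Lebesgue measure). If f is concave on its effective domain then its decreasing rearrangement f↓ is concave on its effective domain; consequently, if f is log-concave then f↓ is log-concave. -/

import Mathlib

open MeasureTheory ENNReal Set Pointwise

/-- Decreasing rearrangement of a set `A ⊆ ℝ`: the interval `[0, |A|)`
(all of `[0, ∞)` if `A` has infinite measure). -/
def setRearr (A : Set ℝ) : Set ℝ := {x | 0 ≤ x ∧ ENNReal.ofReal x < volume A}

/-- Decreasing rearrangement of `f : ℝ → ℝ ∪ {±∞}`: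
`f↓(x) = sup {λ ∈ ℝ : x ∈ {f > λ}↓}`. -/
noncomputable def decRearr (f : ℝ → EReal) : ℝ → EReal :=
  fun x => sSup ((fun l : ℝ => (l : EReal)) ''
    {l : ℝ | x ∈ setRearr {y | (l : EReal) < f y}})

/-- Decreasing rearrangement of a nonnegative real function:
`f↓(x) = sup {λ : x ∈ {f > λ}↓}`. -/
noncomputable def decRearrNN (f : ℝ → ℝ) : ℝ → ℝ :=
  fun x => sSup {l : ℝ | x ∈ setRearr {y | l < f y}}

/-- Concavity of an `ℝ ∪ {±∞}`-valued function on its effective domain, expressed via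
the set-theoretic characterization: for all `λ₀, λ₁ ∈ ℝ` and `t ∈ [0,1]`,
`(1-t){f > λ₀} + t{f > λ₁} ⊆ {f > (1-t)λ₀ + tλ₁}`. -/
def ConcaveLevels (f : ℝ → EReal) : Prop :=
  ∀ (l₀ l₁ t : ℝ), 0 ≤ t → t ≤ 1 → ∀ x y : ℝ,
    (l₀ : EReal) < f x → (l₁ : EReal) < f y →
      (((1 - t) * l₀ + t * l₁ : ℝ) : EReal) < f ((1 - t) * x + t * y)

/-- A nonnegative function on `ℝ` is log-concave iff
`f((1-t)x + ty) ≥ f(x)^{1-t} f(y)^t` for all `x, y` and `t ∈ [0,1]`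
(equivalently `f = e^{-V}` with `V : ℝ → ℝ ∪ {∞}` convex). -/
def LogConcaveFun (f : ℝ → ℝ) : Prop :=
  ∀ x y t : ℝ, 0 ≤ t → t ≤ 1 → f x ^ (1 - t) * f y ^ t ≤ f ((1 - t) * x + t * y)

lemma compact_sum (K L : Set ℝ) (hK : IsCompact K) (hL : IsCompact L)
    (hKne : K.Nonempty) (hLne : L.Nonempty) :
    volume K + volume L ≤ volume (K + L) := by
  set a := sSup K with ha
  set b := sInf L with hb
  have haK : a ∈ K := hK.sSup_mem hKne
  have hbL : b ∈ L := hL.sInf_mem hLne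
  have h1 : b +ᵥ K ⊆ K + L := by
    rintro _ ⟨k, hk, rfl⟩
    show b + k ∈ K + L
    rw [add_comm b k]
    exact add_mem_add hk hbL
  have h2 : a +ᵥ L ⊆ K + L := by
    rintro _ ⟨l, hl, rfl⟩
    exact add_mem_add haK hl

  have hinter : (b +ᵥ K) ∩ (a +ᵥ L) ⊆ {a + b} := by
    rintro w ⟨⟨k, hk, rfl⟩, ⟨l, hl, hw⟩⟩
    have hka : k ≤ a := le_csSup hK.bddAbove hk
    have hbl : b ≤ l := csInf_le hL.bddBelow hl
    have hw' : a + l = b + k := hw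
    have : b + k = a + b := by nlinarith
    show (fun x => b +ᵥ x) k ∈ ({a + b} : Set ℝ)
    simpa using this
  have hmeas : MeasurableSet (a +ᵥ L) := hL.measurableSet.const_vadd a
  have key := measure_union_add_inter (μ := volume) (b +ᵥ K) hmeas
  have hzero : volume ((b +ᵥ K) ∩ (a +ᵥ L)) = 0 :=
    le_antisymm ((measure_mono hinter).trans (by simp)) zero_le
  have hvK : volume (b +ᵥ K) = volume K := measure_vadd _ _ _
  have hvL : volume (a +ᵥ L) = volume L := measure_vadd _ _ _
  calc volume K + volume L = volume ((b +ᵥ K) ∪ (a +ᵥ L)) := by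
        rw [← hvK, ← hvL, ← key, hzero, add_zero]
    _ ≤ volume (K + L) := measure_mono (union_subset h1 h2)

lemma meas_sum (A B : Set ℝ) (hA : MeasurableSet A) (hB : MeasurableSet B)
    (hAne : A.Nonempty) (hBne : B.Nonempty)
    (hAfin : volume A ≠ ⊤) (hBfin : volume B ≠ ⊤) :
    volume A + volume B ≤ volume (A + B) := by
  obtain ⟨a₀, ha₀⟩ := hAne
  obtain ⟨b₀, hb₀⟩ := hBne
  refine ENNReal.le_of_forall_pos_le_add fun ε hε _ => ?_
  have hε2 : ((ε : ℝ≥0∞) / 2) ≠ 0 := by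
    simp [ENNReal.div_eq_top, hε.ne']
  obtain ⟨K, hKA, hKc, hKm⟩ := hA.exists_isCompact_lt_add hAfin hε2
  obtain ⟨L, hLB, hLc, hLm⟩ := hB.exists_isCompact_lt_add hBfin hε2
  set K' := insert a₀ K
  set L' := insert b₀ L
  have hK'c : IsCompact K' := hKc.insert a₀
  have hL'c : IsCompact L' := hLc.insert b₀
  have hK'A : K' ⊆ A := insert_subset ha₀ hKA
  have hL'B : L' ⊆ B := insert_subset hb₀ hLB
  have h1 : volume A ≤ volume K' + ε / 2 :=
    hKm.le.trans (add_le_add_left (measure_mono (subset_insert _ _)) _)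
  have h2 : volume B ≤ volume L' + ε / 2 :=
    hLm.le.trans (add_le_add_left (measure_mono (subset_insert _ _)) _)
  calc volume A + volume B ≤ (volume K' + ε / 2) + (volume L' + ε / 2) := add_le_add h1 h2
    _ = (volume K' + volume L') + ε := by
        rw [add_add_add_comm, ENNReal.add_halves]
    _ ≤ volume (K' + L') + ε := by
        gcongr
        exact compact_sum K' L' hK'c hL'c ⟨a₀, mem_insert _ _⟩ ⟨b₀, mem_insert _ _⟩
    _ ≤ volume (A + B) + ε :=
        add_le_add_left (measure_mono (add_subset_add hK'A hL'B)) ε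

lemma core_lemma (A B C : Set ℝ) (hA : MeasurableSet A) (hB : MeasurableSet B)
    (hAfin : volume A ≠ ⊤) (hBfin : volume B ≠ ⊤)
    (t : ℝ) (ht0 : 0 ≤ t) (ht1 : t ≤ 1)
    (hC : ∀ a ∈ A, ∀ b ∈ B, (1 - t) * a + t * b ∈ C)
    (x y : ℝ) (hx : 0 ≤ x) (hy : 0 ≤ y)
    (hxA : ENNReal.ofReal x < volume A) (hyB : ENNReal.ofReal y < volume B) :
    ENNReal.ofReal ((1 - t) * x + t * y) < volume C := by
  have hAne : A.Nonempty := nonempty_of_measure_ne_zero (by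
    intro h; rw [h] at hxA; exact (not_lt.2 zero_le) hxA)
  have hBne : B.Nonempty := nonempty_of_measure_ne_zero (by
    intro h; rw [h] at hyB; exact (not_lt.2 zero_le) hyB)
  rcases ht0.eq_or_lt with rfl | htpos
  · obtain ⟨b, hb⟩ := hBne
    have hAC : A ⊆ C := fun a ha => by simpa using hC a ha b hb
    calc ENNReal.ofReal ((1 - 0) * x + 0 * y) = ENNReal.ofReal x := by norm_num
      _ < volume A := hxA
      _ ≤ volume C := measure_mono hAC
  rcases ht1.eq_or_lt with rfl | htlt
  · obtain ⟨a, ha⟩ := hAne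
    have hBC : B ⊆ C := fun b hb => by simpa using hC a ha b hb
    calc ENNReal.ofReal ((1 - 1) * x + 1 * y) = ENNReal.ofReal y := by norm_num
      _ < volume B := hyB
      _ ≤ volume C := measure_mono hBC
  have ht' : 0 < 1 - t := by linarith
  set A' := (1 - t) • A with hA'
  set B' := t • B with hB'
  have hA'm : MeasurableSet A' := hA.const_smul₀ (1 - t)
  have hB'm : MeasurableSet B' := hB.const_smul₀ t
  have hvA' : volume A' = ENNReal.ofReal (1 - t) * volume A := by
    rw [hA', Measure.addHaar_smul_of_nonneg _ ht'.le]
    simp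
  have hvB' : volume B' = ENNReal.ofReal t * volume B := by
    rw [hB', Measure.addHaar_smul_of_nonneg _ htpos.le]
    simp
  have hsub : A' + B' ⊆ C := by
    rintro _ ⟨_, ⟨a, ha, rfl⟩, _, ⟨b, hb, rfl⟩, rfl⟩
    exact hC a ha b hb
  have hA'fin : volume A' ≠ ⊤ := by
    rw [hvA']; exact ENNReal.mul_ne_top ofReal_ne_top hAfin
  have hB'fin : volume B' ≠ ⊤ := by
    rw [hvB']; exact ENNReal.mul_ne_top ofReal_ne_top hBfin
  have hA'ne : A'.Nonempty := hAne.smul_set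
  have hB'ne : B'.Nonempty := hBne.smul_set
  have hsum := meas_sum A' B' hA'm hB'm hA'ne hB'ne hA'fin hB'fin
  have h1t : ENNReal.ofReal (1 - t) ≠ 0 := (ENNReal.ofReal_pos.2 ht').ne'
  have htne : ENNReal.ofReal t ≠ 0 := (ENNReal.ofReal_pos.2 htpos).ne'
  calc ENNReal.ofReal ((1 - t) * x + t * y)
      = ENNReal.ofReal (1 - t) * ENNReal.ofReal x + ENNReal.ofReal t * ENNReal.ofReal y := by
        rw [ENNReal.ofReal_add (by positivity) (by positivity),
          ENNReal.ofReal_mul ht'.le, ENNReal.ofReal_mul ht0]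
    _ < ENNReal.ofReal (1 - t) * volume A + ENNReal.ofReal t * volume B :=
        ENNReal.add_lt_add (ENNReal.mul_lt_mul_right h1t ofReal_ne_top hxA)
          (ENNReal.mul_lt_mul_right htne ofReal_ne_top hyB)
    _ = volume A' + volume B' := by rw [hvA', hvB']
    _ ≤ volume (A' + B') := hsum
    _ ≤ volume C := measure_mono hsub

lemma neg_mem_S (f : ℝ → ℝ) (hf0 : ∀ w, 0 ≤ f w) (z : ℝ) (hz : 0 ≤ z)
    {l : ℝ} (hl : l < 0) : l ∈ {l : ℝ | z ∈ setRearr {y | l < f y}} := by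
  have huniv : {y : ℝ | l < f y} = univ := eq_univ_of_forall fun w => lt_of_lt_of_le hl (hf0 w)
  refine ⟨hz, ?_⟩
  rw [huniv]
  simp [Real.volume_univ]

lemma decRearrNN_nonneg (f : ℝ → ℝ) (hf0 : ∀ w, 0 ≤ f w) (z : ℝ) (hz : 0 ≤ z) :
    0 ≤ decRearrNN f z := by
  set S := {l : ℝ | z ∈ setRearr {y | l < f y}} with hS
  by_cases hbdd : BddAbove S
  · by_contra h
    push_neg at h
    have hmem : sSup S / 2 ∈ S := neg_mem_S f hf0 z hz (by
      show sSup S / 2 < 0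
      have : decRearrNN f z = sSup S := rfl
      linarith [this ▸ h])
    have := le_csSup hbdd hmem
    have hlt : decRearrNN f z = sSup S := rfl
    rw [hlt] at h
    linarith
  · show 0 ≤ sSup S
    rw [Real.sSup_of_not_bddAbove hbdd]

lemma bdd_of_pos (f : ℝ → ℝ) (hf : Measurable f)
    (hfin : ∀ l : ℝ, 0 < l → volume {y | l < f y} < ⊤) (z : ℝ) (hz : 0 < z) :
    BddAbove {l : ℝ | z ∈ setRearr {y | l < f y}} := by
  set s : ℕ → Set ℝ := fun n => {y | (n + 1 : ℝ) < f y} with hs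
  have hmeas : ∀ n, NullMeasurableSet (s n) volume := fun n =>
    (hf measurableSet_Ioi).nullMeasurableSet
  have hanti : Antitone s := by
    intro n m hnm w hw
    simp only [hs, mem_setOf_eq] at hw ⊢
    have : (n : ℝ) ≤ m := Nat.cast_le.2 hnm
    linarith
  have hfi : ∃ n, volume (s n) ≠ ∞ := ⟨0, by
    have h0 : s 0 = {y | (1:ℝ) < f y} := by norm_num [hs]
    rw [h0]; exact (hfin 1 one_pos).ne⟩
  have hiInter : ⋂ n, s n = ∅ := by
    rw [eq_empty_iff_forall_notMem]
    intro w hw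
    obtain ⟨n, hn⟩ := exists_nat_gt (f w)
    exact absurd (mem_iInter.1 hw n) (by simp only [hs, mem_setOf_eq]; push_neg; linarith)
  have htend := tendsto_measure_iInter_atTop hmeas hanti hfi
  rw [hiInter, measure_empty] at htend
  have hev : ∀ᶠ n in Filter.atTop, volume (s n) < ENNReal.ofReal z :=
    htend.eventually_lt_const (by simpa using hz)
  obtain ⟨n, hn⟩ := hev.exists
  refine ⟨n + 1, fun l hl => ?_⟩
  by_contra hcon
  push_neg at hcon
  have hsub : {y | l < f y} ⊆ s n := fun w hw => lt_trans hcon hw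
  have := hl.2
  exact absurd (lt_of_lt_of_le this (measure_mono hsub)) (not_lt.2 hn.le)

lemma aux_part1 (f : ℝ → EReal) (hf : Measurable f)
    (hfin : ∀ c : ℝ, volume {x | (c : EReal) < f x} < ⊤)
    (hconc : ConcaveLevels f) : ConcaveLevels (decRearr f) := by
  intro l₀ l₁ t ht0 ht1 x y hx hy
  rw [decRearr, lt_sSup_iff] at hx hy
  obtain ⟨_, ⟨l₀', hm₀, rfl⟩, hlt₀⟩ := hx
  obtain ⟨_, ⟨l₁', hm₁, rfl⟩, hlt₁⟩ := hy
  rw [EReal.coe_lt_coe_iff] at hlt₀ hlt₁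
  obtain ⟨hx0, hxA⟩ := hm₀
  obtain ⟨hy0, hyB⟩ := hm₁
  set l' := (1 - t) * l₀' + t * l₁' with hl'
  have hcore := core_lemma {w | (l₀' : EReal) < f w} {w | (l₁' : EReal) < f w}
    {w | (l' : EReal) < f w}
    (hf measurableSet_Ioi) (hf measurableSet_Ioi)
    (hfin l₀').ne (hfin l₁').ne t ht0 ht1
    (fun a ha b hb => hconc l₀' l₁' t ht0 ht1 a b ha hb)
    x y hx0 hy0 hxA hyB
  have hz0 : 0 ≤ (1 - t) * x + t * y := by nlinarith
  have hmem : (l' : EReal) ∈ ((fun l : ℝ => (l : EReal)) ''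
      {l : ℝ | ((1 - t) * x + t * y) ∈ setRearr {y | (l : EReal) < f y}}) :=
    ⟨l', ⟨hz0, hcore⟩, rfl⟩
  have hle : (l' : EReal) ≤ decRearr f ((1 - t) * x + t * y) := le_sSup hmem
  refine lt_of_lt_of_le ?_ hle
  rw [EReal.coe_lt_coe_iff]
  rw [hl']
  rcases eq_or_lt_of_le ht1 with rfl | htlt
  · nlinarith
  · have h1 : (1 - t) * l₀ < (1 - t) * l₀' := by nlinarith
    have h2 : t * l₁ ≤ t * l₁' := by nlinarith
    linarith

lemma aux_part2 (f : ℝ → ℝ) (hf : Measurable f) (hf0 : ∀ x, 0 ≤ f x)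
    (hfin : ∀ l : ℝ, 0 < l → volume {y | l < f y} < ⊤)
    (hlc : LogConcaveFun f)
    (x y t : ℝ) (hx : 0 ≤ x) (hy : 0 ≤ y) (ht0 : 0 ≤ t) (ht1 : t ≤ 1) :
    decRearrNN f x ^ (1 - t) * decRearrNN f y ^ t ≤
      decRearrNN f ((1 - t) * x + t * y) := by
  rcases ht0.eq_or_lt with rfl | htpos
  · norm_num
  rcases ht1.eq_or_lt with rfl | htlt
  · norm_num
  have ht' : 0 < 1 - t := by linarith
  set z := (1 - t) * x + t * y with hzdef
  have hz0 : 0 ≤ z := by nlinarith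
  have hrz := decRearrNN_nonneg f hf0 z hz0
  by_cases hbx : BddAbove {l : ℝ | x ∈ setRearr {y | l < f y}}
  swap
  · have hx0 : decRearrNN f x = 0 := Real.sSup_of_not_bddAbove hbx
    rw [hx0, Real.zero_rpow ht'.ne', zero_mul]
    exact hrz
  by_cases hby : BddAbove {l : ℝ | y ∈ setRearr {y' | l < f y'}}
  swap
  · have hy0 : decRearrNN f y = 0 := Real.sSup_of_not_bddAbove hby
    rw [hy0, Real.zero_rpow htpos.ne', mul_zero]
    exact hrz
  have hax := decRearrNN_nonneg f hf0 x hx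
  have hay := decRearrNN_nonneg f hf0 y hy
  rcases hax.eq_or_lt with hax0 | haxpos
  · rw [← hax0, Real.zero_rpow ht'.ne', zero_mul]
    exact hrz
  rcases hay.eq_or_lt with hay0 | haypos
  · rw [← hay0, Real.zero_rpow htpos.ne', mul_zero]
    exact hrz
  have hbz : BddAbove {l : ℝ | z ∈ setRearr {y | l < f y}} := by
    rcases hz0.eq_or_lt with hz | hz
    · have hxzero : x = 0 := by nlinarith [mul_nonneg htpos.le hy]
      have hzx : z = x := by rw [hzdef, hxzero]; nlinarith [mul_nonneg htpos.le hy]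
      rw [hzx]
      exact hbx
    · exact bdd_of_pos f hf hfin z hz
  set a := decRearrNN f x with hadef
  set b := decRearrNN f y with hbdef
  set P := a ^ (1 - t) * b ^ t with hPdef
  have hP : 0 < P :=
    mul_pos (Real.rpow_pos_of_pos haxpos _) (Real.rpow_pos_of_pos haypos _)
  refine le_of_forall_lt fun c hc => ?_
  set s := max c 0 with hsdef
  have hs0 : 0 ≤ s := le_max_right _ _
  have hsP : s < P := max_lt hc hP
  set θ := (s / P + 1) / 2 with hθdef
  have hsPlt : s / P < 1 := (div_lt_one hP).2 hsP
  have hsPnn : 0 ≤ s / P := div_nonneg hs0 hP.le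
  have hθpos : 0 < θ := by rw [hθdef]; linarith
  have hθlt : θ < 1 := by rw [hθdef]; linarith
  have hθP : s < θ * P := by
    have h1 : s / P < θ := by rw [hθdef]; linarith
    calc s = s / P * P := (div_mul_cancel₀ s hP.ne').symm
      _ < θ * P := by nlinarith
  have hSxne : {l : ℝ | x ∈ setRearr {y | l < f y}}.Nonempty :=
    ⟨-1, neg_mem_S f hf0 x hx (by norm_num)⟩
  have hSyne : {l : ℝ | y ∈ setRearr {y' | l < f y'}}.Nonempty :=
    ⟨-1, neg_mem_S f hf0 y hy (by norm_num)⟩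
  have hθa : θ * a < sSup {l : ℝ | x ∈ setRearr {y | l < f y}} := by
    have : sSup {l : ℝ | x ∈ setRearr {y | l < f y}} = a := rfl
    rw [this]; nlinarith
  have hθb : θ * b < sSup {l : ℝ | y ∈ setRearr {y' | l < f y'}} := by
    have : sSup {l : ℝ | y ∈ setRearr {y' | l < f y'}} = b := rfl
    rw [this]; nlinarith
  obtain ⟨l₀, hl₀S, hl₀gt⟩ := exists_lt_of_lt_csSup hSxne hθa
  obtain ⟨l₁, hl₁S, hl₁gt⟩ := exists_lt_of_lt_csSup hSyne hθb
  have hl₀pos : 0 < l₀ := lt_trans (by positivity) hl₀gt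
  have hl₁pos : 0 < l₁ := lt_trans (by positivity) hl₁gt
  set L := l₀ ^ (1 - t) * l₁ ^ t with hLdef
  have hC : ∀ a' ∈ {w : ℝ | l₀ < f w}, ∀ b' ∈ {w : ℝ | l₁ < f w},
      (1 - t) * a' + t * b' ∈ {w : ℝ | L < f w} := by
    intro a' ha' b' hb'
    have h1 : l₀ ^ (1 - t) < f a' ^ (1 - t) := Real.rpow_lt_rpow hl₀pos.le ha' ht'
    have h2 : l₁ ^ t < f b' ^ t := Real.rpow_lt_rpow hl₁pos.le hb' htpos
    have h3 : L < f a' ^ (1 - t) * f b' ^ t :=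
      mul_lt_mul'' h1 h2 (Real.rpow_nonneg hl₀pos.le _) (Real.rpow_nonneg hl₁pos.le _)
    exact lt_of_lt_of_le h3 (hlc a' b' t htpos.le htlt.le)
  have hcore := core_lemma {w | l₀ < f w} {w | l₁ < f w} {w | L < f w}
    (hf measurableSet_Ioi) (hf measurableSet_Ioi)
    (hfin l₀ hl₀pos).ne (hfin l₁ hl₁pos).ne
    t htpos.le htlt.le hC x y hx hy hl₀S.2 hl₁S.2
  have hLmem : L ∈ {l : ℝ | z ∈ setRearr {y | l < f y}} := ⟨hz0, hcore⟩
  have hLge : θ * P ≤ L := by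
    have h1 : (θ * a) ^ (1 - t) ≤ l₀ ^ (1 - t) :=
      Real.rpow_le_rpow (by positivity) hl₀gt.le ht'.le
    have h2 : (θ * b) ^ t ≤ l₁ ^ t :=
      Real.rpow_le_rpow (by positivity) hl₁gt.le htpos.le
    have h3 : (θ * a) ^ (1 - t) * (θ * b) ^ t = θ * P := by
      rw [Real.mul_rpow hθpos.le hax, Real.mul_rpow hθpos.le hay,
        show θ ^ (1 - t) * a ^ (1 - t) * (θ ^ t * b ^ t)
          = θ ^ (1 - t) * θ ^ t * (a ^ (1 - t) * b ^ t) by ring,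
        ← Real.rpow_add hθpos]
      norm_num [hPdef]
    calc θ * P = (θ * a) ^ (1 - t) * (θ * b) ^ t := h3.symm
      _ ≤ L := mul_le_mul h1 h2 (by positivity) (Real.rpow_nonneg hl₀pos.le _)
  have hcs : c ≤ s := le_max_left _ _
  have hcL : c < L := lt_of_le_of_lt hcs (lt_of_lt_of_le hθP hLge)
  exact lt_of_lt_of_le hcL (le_csSup hbz hLmem)

/-- If a Borel function `f : ℝ → ℝ ∪ {±∞}` vanishing at infinity is concave on its
effective domain, then so is its decreasing rearrangement `f↓`; consequently, if a
nonnegative `f` is log-concave then `f↓` is log-concave (on `[0,∞)`). -/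
theorem decRearr_concave_and_logConcave :
    (∀ f : ℝ → EReal, Measurable f →
      (∀ c : ℝ, volume {x | (c : EReal) < f x} < ⊤) →
      ConcaveLevels f → ConcaveLevels (decRearr f)) ∧
    (∀ f : ℝ → ℝ, Measurable f → (∀ x, 0 ≤ f x) →
      (∀ l : ℝ, 0 < l → volume {y | l < f y} < ⊤) →
      LogConcaveFun f →
      ∀ x y t : ℝ, 0 ≤ x → 0 ≤ y → 0 ≤ t → t ≤ 1 →
        decRearrNN f x ^ (1 - t) * decRearrNN f y ^ t ≤
          decRearrNN f ((1 - t) * x + t * y)) := by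
  exact ⟨aux_part1, aux_part2⟩
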